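/- arXiv:2310.09569 — 10 statements merged into one kernel-verified Lean document; each statement's English description precedes it below -/
import Mathlib

section
/- Let r and s be coprime integers with 1 < r < s. Then π₂ = π₁ π₄^r, i.e. for every i in {1,...,s} one has π₂(i) = π₁(π₄^r(i)). -/
theorem stmt_1
    (r s : ℕ) (hr : 1 < r) (hrs : r < s) (hco : Nat.Coprime r s)
    (π₁ : Equiv.Perm ℕ)
    (hπ₁₁ : ∀ i : ℕ, 1 ≤ i → i ≤ r → π₁ i = r + 1 - i)
    (hπ₁₂ : ∀ i : ℕ, r + 1 ≤ i → i ≤ s → π₁ i = i)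
    (hπ₁₃ : ∀ i : ℕ, i = 0 ∨ s < i → π₁ i = i)
    (π₂ : Equiv.Perm ℕ)
    (hπ₂₁ : ∀ i : ℕ, 1 ≤ i → i ≤ s - r → π₂ i = r + i)
    (hπ₂₂ : ∀ i : ℕ, s - r + 1 ≤ i → i ≤ s → π₂ i = s + 1 - i)
    (hπ₂₃ : ∀ i : ℕ, i = 0 ∨ s < i → π₂ i = i)
    (π₄ : Equiv.Perm ℕ)
    (hπ₄₁ : ∀ i : ℕ, 1 ≤ i → i ≤ s - 1 → π₄ i = i + 1)
    (hπ₄₂ : π₄ s = 1)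
    (hπ₄₃ : ∀ i : ℕ, i = 0 ∨ s < i → π₄ i = i) :
    ∀ i : ℕ, 1 ≤ i → i ≤ s → π₂ i = π₁ ((π₄ ^ r) i) := by
  have key : ∀ k : ℕ, k < s → ∀ i : ℕ, 1 ≤ i → i ≤ s →
      (π₄ ^ k) i = if i + k ≤ s then i + k else i + k - s := by
    intro k
    induction k with
    | zero => intro _ i h1 h2; simp only [pow_zero, Equiv.Perm.one_apply]; split_ifs <;> omega
    | succ k ih =>
      intro hk i h1 h2
      rw [pow_succ', Equiv.Perm.mul_apply, ih (by omega) i h1 h2]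
      by_cases h : i + k ≤ s
      · rw [if_pos h]
        by_cases h2' : i + k ≤ s - 1
        · rw [hπ₄₁ (i + k) (by omega) h2']
          split_ifs <;> omega
        · have : i + k = s := by omega
          rw [this, hπ₄₂]
          split_ifs <;> omega
      · rw [if_neg h, hπ₄₁ (i + k - s) (by omega) (by omega)]
        split_ifs <;> omega
  intro i h1 h2
  rw [key r (by omega) i h1 h2]
  by_cases h : i + r ≤ s
  · rw [if_pos h, hπ₁₂ (i + r) (by omega) h, hπ₂₁ i h1 (by omega)]
    omega
  · rw [if_neg h, hπ₁₁ (i + r - s) (by omega) (by omega),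
      hπ₂₂ i (by omega) h2]
    omega
end

section
/- Let r and s be coprime integers with 1 < r < s. Then the inversion set Inv(π₄ π₃⁻¹) contains the inversion set Inv(π₃⁻¹). -/
/-- The inversion set of a permutation of `{1, ..., s}`:
pairs `(i, j)` with `1 ≤ i < j ≤ s` and `π i > π j`. -/
def invSet (s : ℕ) (π : Equiv.Perm ℕ) : Set (ℕ × ℕ) :=
  {p : ℕ × ℕ | 1 ≤ p.1 ∧ p.1 < p.2 ∧ p.2 ≤ s ∧ π p.2 < π p.1}

theorem stmt_3
    (r s : ℕ) (hr : 1 < r) (hrs : r < s) (hco : Nat.Coprime r s)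
    (π₃ : Equiv.Perm ℕ)
    (hπ₃₁ : ∀ i : ℕ, 1 ≤ i → i ≤ s → 1 ≤ π₃ i ∧ π₃ i ≤ s ∧ π₃ i % s = (r * i) % s)
    (hπ₃₂ : ∀ i : ℕ, i = 0 ∨ s < i → π₃ i = i)
    (π₄ : Equiv.Perm ℕ)
    (hπ₄₁ : ∀ i : ℕ, 1 ≤ i → i ≤ s - 1 → π₄ i = i + 1)
    (hπ₄₂ : π₄ s = 1)
    (hπ₄₃ : ∀ i : ℕ, i = 0 ∨ s < i → π₄ i = i) :
    invSet s π₃⁻¹ ⊆ invSet s (π₄ * π₃⁻¹) := by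
  -- π₃⁻¹ maps [1,s] into [1,s]
  have hrange : ∀ i : ℕ, 1 ≤ i → i ≤ s → 1 ≤ π₃⁻¹ i ∧ π₃⁻¹ i ≤ s := by
    intro i h1 h2
    by_contra h
    push_neg at h
    have : π₃ (π₃⁻¹ i) = π₃⁻¹ i := by
      rcases Nat.lt_or_ge (π₃⁻¹ i) 1 with h' | h'
      · exact hπ₃₂ _ (Or.inl (Nat.lt_one_iff.mp h'))
      · exact hπ₃₂ _ (Or.inr (h h'))
    rw [← Equiv.Perm.mul_apply, mul_inv_cancel, Equiv.Perm.one_apply] at this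
    rcases Nat.lt_or_ge (π₃⁻¹ i) 1 with h' | h'
    · omega
    · have := h h'; omega
  -- π₃ s = s
  have hs : π₃ s = s := by
    have hs1 : 1 ≤ s := by omega
    obtain ⟨h1, h2, h3⟩ := hπ₃₁ s hs1 le_rfl
    rw [Nat.mul_mod_left] at h3
    have : s ∣ π₃ s := Nat.dvd_of_mod_eq_zero h3
    have := Nat.le_of_dvd (by omega) this
    omega
  rintro ⟨i, j⟩ ⟨h1, h2, h3, h4⟩
  simp only [invSet, Set.mem_setOf_eq] at *
  set a := π₃⁻¹ i with ha
  set b := π₃⁻¹ j with hb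
  obtain ⟨ha1, ha2⟩ := hrange i h1 (by omega)
  obtain ⟨hb1, hb2⟩ := hrange j (by omega) h3
  -- a ≠ s since π₃ s = s and i < s
  have has : a ≠ s := by
    intro h
    have : π₃ a = i := by rw [ha, ← Equiv.Perm.mul_apply, mul_inv_cancel, Equiv.Perm.one_apply]
    rw [h, hs] at this
    omega
  have hbs : b < s := by omega
  refine ⟨h1, h2, h3, ?_⟩
  simp only [Equiv.Perm.mul_apply]
  rw [show π₃⁻¹ i = a from rfl, show π₃⁻¹ j = b from rfl]
  rw [hπ₄₁ a ha1 (by omega), hπ₄₁ b hb1 (by omega)]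
  omega
end

section
/- Let r and s be coprime integers with 1 < r < s. Then the inversion set Inv(π₅⁻¹ π₂) contains the inversion set Inv(π₃⁻¹ π₄^r). -/
theorem stmt_6
    (r s : ℕ) (hr : 1 < r) (hrs : r < s) (hco : Nat.Coprime r s)
    (π₂ : Equiv.Perm ℕ)
    (hπ₂₁ : ∀ i : ℕ, 1 ≤ i → i ≤ s - r → π₂ i = r + i)
    (hπ₂₂ : ∀ i : ℕ, s - r + 1 ≤ i → i ≤ s → π₂ i = s + 1 - i)
    (hπ₂₃ : ∀ i : ℕ, i = 0 ∨ s < i → π₂ i = i)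
    (π₃ : Equiv.Perm ℕ)
    (hπ₃₁ : ∀ i : ℕ, 1 ≤ i → i ≤ s → 1 ≤ π₃ i ∧ π₃ i ≤ s ∧ π₃ i % s = (r * i) % s)
    (hπ₃₂ : ∀ i : ℕ, i = 0 ∨ s < i → π₃ i = i)
    (π₄ : Equiv.Perm ℕ)
    (hπ₄₁ : ∀ i : ℕ, 1 ≤ i → i ≤ s - 1 → π₄ i = i + 1)
    (hπ₄₂ : π₄ s = 1)
    (hπ₄₃ : ∀ i : ℕ, i = 0 ∨ s < i → π₄ i = i)
    (π₅ : Equiv.Perm ℕ)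
    (hπ₅₁ : ∀ i : ℕ, 1 ≤ i → i ≤ r → π₅⁻¹ i = i)
    (hπ₅₂ : ∀ i : ℕ, r + 1 ≤ i → i ≤ s →
      π₅⁻¹ i = r + ((Finset.Icc (r + 1) s).filter (fun j => π₃⁻¹ j ≤ π₃⁻¹ i)).card)
    (hπ₅₃ : ∀ i : ℕ, i = 0 ∨ s < i → π₅ i = i) :
    invSet s (π₃⁻¹ * π₄ ^ r) ⊆ invSet s (π₅⁻¹ * π₂) := by
  have hs1 : 1 ≤ s := by omega
  -- π₃⁻¹ maps [1,s] into [1,s]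
  have hπ₃inv_mem : ∀ i : ℕ, 1 ≤ i → i ≤ s → 1 ≤ π₃⁻¹ i ∧ π₃⁻¹ i ≤ s := by
    intro i h1 h2
    by_cases h0 : π₃⁻¹ i = 0 ∨ s < π₃⁻¹ i
    · have h1' := hπ₃₂ _ h0
      have h2' : π₃ (π₃⁻¹ i) = i := π₃.apply_symm_apply i
      rw [h1'] at h2'
      omega
    · push_neg at h0; omega
  -- π₃ fixes s
  have hπ₃s : π₃ s = s := by
    obtain ⟨h1, h2, h3⟩ := hπ₃₁ s hs1 le_rfl
    have h0 : (r * s) % s = 0 := Nat.mul_mod_left r s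
    have h4 : π₃ s % s = 0 := by rw [h3, h0]
    rcases Nat.lt_or_ge (π₃ s) s with h5 | h5
    · rw [Nat.mod_eq_of_lt h5] at h4; omega
    · omega
  -- key: π₃⁻¹ (r + i) = π₃⁻¹ i + 1 for 1 ≤ i ≤ s - r
  have hkey : ∀ i : ℕ, 1 ≤ i → i ≤ s - r → π₃⁻¹ (r + i) = π₃⁻¹ i + 1 := by
    intro i h1 h2
    set a := π₃⁻¹ i with ha
    obtain ⟨ha1, ha2⟩ := hπ₃inv_mem i h1 (by omega)
    have hπ₃a : π₃ a = i := π₃.apply_symm_apply i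
    have hane : a ≠ s := by
      intro h
      rw [h, hπ₃s] at hπ₃a; omega
    obtain ⟨hb1, hb2, hb3⟩ := hπ₃₁ (a + 1) (by omega) (by omega)
    have hra : (r * a) % s = i % s := by
      obtain ⟨_, _, h3⟩ := hπ₃₁ a ha1 ha2
      rw [hπ₃a] at h3; exact h3.symm
    have hi : i % s = i := Nat.mod_eq_of_lt (by omega)
    have h5 : π₃ (a + 1) % s = (r + i) % s := by
      rw [hb3, show r * (a + 1) = r * a + r from by ring, ← Nat.mod_add_mod, hra, hi,
        Nat.add_comm]
    have h6 : π₃ (a + 1) = r + i := by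
      rcases Nat.lt_or_ge (π₃ (a + 1)) s with hx | hx
      · rw [Nat.mod_eq_of_lt hx] at h5
        rcases Nat.lt_or_ge (r + i) s with hy | hy
        · rw [Nat.mod_eq_of_lt hy] at h5; omega
        · have hri : r + i = s := by omega
          rw [hri, Nat.mod_self] at h5; omega
      · have hxs : π₃ (a + 1) = s := by omega
        rw [hxs, Nat.mod_self] at h5
        rcases Nat.lt_or_ge (r + i) s with hy | hy
        · rw [Nat.mod_eq_of_lt hy] at h5; omega
        · omega
    have h7 := congrArg (⇑π₃⁻¹) h6
    rw [show π₃⁻¹ (π₃ (a + 1)) = a + 1 from π₃.symm_apply_apply _] at h7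
    omega
  -- powers of π₄
  have hpow : ∀ k : ℕ, ∀ i : ℕ, 1 ≤ i → i + k ≤ s → (π₄ ^ k) i = i + k := by
    intro k
    induction k with
    | zero => intro i h1 h2; simp
    | succ n ih =>
      intro i h1 h2
      rw [pow_succ, Equiv.Perm.mul_apply, hπ₄₁ i h1 (by omega),
        ih (i + 1) (by omega) (by omega)]
      omega
  -- σ formula on [1, s-r]
  have hσ : ∀ i : ℕ, 1 ≤ i → i ≤ s - r → (π₃⁻¹ * π₄ ^ r) i = π₃⁻¹ i + 1 := by
    intro i h1 h2
    rw [Equiv.Perm.mul_apply, hpow r i h1 (by omega),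
      show i + r = r + i from by ring, hkey i h1 h2]
  -- τ formulas
  have hτ₂ : ∀ i : ℕ, s - r + 1 ≤ i → i ≤ s → (π₅⁻¹ * π₂) i = s + 1 - i := by
    intro i h1 h2
    rw [Equiv.Perm.mul_apply, hπ₂₂ i h1 h2, hπ₅₁ (s + 1 - i) (by omega) (by omega)]
  have hτ₁ : ∀ i : ℕ, 1 ≤ i → i ≤ s - r → (π₅⁻¹ * π₂) i =
      r + ((Finset.Icc (r + 1) s).filter (fun j => π₃⁻¹ j ≤ π₃⁻¹ (r + i))).card := by
    intro i h1 h2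
    rw [Equiv.Perm.mul_apply, hπ₂₁ i h1 h2, hπ₅₂ (r + i) (by omega) (by omega)]
  -- main argument
  intro p hp
  obtain ⟨h1, h2, h3, h4⟩ := hp
  refine ⟨h1, h2, h3, ?_⟩
  by_cases hi : p.1 ≤ s - r
  · by_cases hj : p.2 ≤ s - r
    · -- both small: use the key comparison
      rw [hσ p.1 h1 hi, hσ p.2 (by omega) hj] at h4
      have hij : π₃⁻¹ (r + p.2) < π₃⁻¹ (r + p.1) := by
        rw [hkey p.1 h1 hi, hkey p.2 (by omega) hj]; omega
      rw [hτ₁ p.1 h1 hi, hτ₁ p.2 (by omega) hj]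
      have hsub : (Finset.Icc (r + 1) s).filter (fun k => π₃⁻¹ k ≤ π₃⁻¹ (r + p.2)) ⊂
          (Finset.Icc (r + 1) s).filter (fun k => π₃⁻¹ k ≤ π₃⁻¹ (r + p.1)) := by
        constructor
        · intro k hk
          simp only [Finset.mem_filter] at hk ⊢
          exact ⟨hk.1, hk.2.trans hij.le⟩
        · intro hcontra
          have hmem : r + p.1 ∈
              (Finset.Icc (r + 1) s).filter (fun k => π₃⁻¹ k ≤ π₃⁻¹ (r + p.1)) := by
            simp only [Finset.mem_filter, Finset.mem_Icc]
            exact ⟨⟨by omega, by omega⟩, le_rfl⟩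
          have h5 := hcontra hmem
          simp only [Finset.mem_filter] at h5
          omega
      have := Finset.card_lt_card hsub
      omega
    · -- p.1 small, p.2 large
      rw [hτ₁ p.1 h1 hi, hτ₂ p.2 (by omega) h3]
      have hmem : r + p.1 ∈
          (Finset.Icc (r + 1) s).filter (fun k => π₃⁻¹ k ≤ π₃⁻¹ (r + p.1)) := by
        simp only [Finset.mem_filter, Finset.mem_Icc]
        exact ⟨⟨by omega, by omega⟩, le_rfl⟩
      have := Finset.card_pos.mpr ⟨r + p.1, hmem⟩
      omega
  · -- both large
    rw [hτ₂ p.1 (by omega) (by omega), hτ₂ p.2 (by omega) h3]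
    omega
end

section
/- Let r and s be coprime integers with 1 < r < s. Then the inversion set Inv(π₃⁻¹) contains the inversion set Inv(π₅⁻¹). -/
theorem stmt_7
    (r s : ℕ) (hr : 1 < r) (hrs : r < s) (hco : Nat.Coprime r s)
    (π₃ : Equiv.Perm ℕ)
    (hπ₃₁ : ∀ i : ℕ, 1 ≤ i → i ≤ s → 1 ≤ π₃ i ∧ π₃ i ≤ s ∧ π₃ i % s = (r * i) % s)
    (hπ₃₂ : ∀ i : ℕ, i = 0 ∨ s < i → π₃ i = i)
    (π₅ : Equiv.Perm ℕ)
    (hπ₅₁ : ∀ i : ℕ, 1 ≤ i → i ≤ r → π₅⁻¹ i = i)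
    (hπ₅₂ : ∀ i : ℕ, r + 1 ≤ i → i ≤ s →
      π₅⁻¹ i = r + ((Finset.Icc (r + 1) s).filter (fun j => π₃⁻¹ j ≤ π₃⁻¹ i)).card)
    (hπ₅₃ : ∀ i : ℕ, i = 0 ∨ s < i → π₅ i = i) :
    invSet s π₅⁻¹ ⊆ invSet s π₃⁻¹ := by
  rintro ⟨i, j⟩ ⟨h1, h2, h3, h4⟩
  refine ⟨h1, h2, h3, ?_⟩
  simp only at h4 ⊢
  by_cases hj : j ≤ r
  · -- both i, j ≤ r : contradiction
    have hi : i ≤ r := le_trans h2.le hj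
    rw [hπ₅₁ i h1 hi, hπ₅₁ j (by omega) hj] at h4
    omega
  · by_cases hi : i ≤ r
    · -- i ≤ r < j : π₅⁻¹ j > r ≥ π₅⁻¹ i, contradiction
      rw [hπ₅₁ i h1 hi, hπ₅₂ j (by omega) h3] at h4
      have hjmem : j ∈ (Finset.Icc (r + 1) s).filter (fun k => π₃⁻¹ k ≤ π₃⁻¹ j) := by
        simp [Finset.mem_Icc]; omega
      have := Finset.card_pos.mpr ⟨j, hjmem⟩
      omega
    · -- r < i < j
      rw [hπ₅₂ i (by omega) (by omega), hπ₅₂ j (by omega) h3] at h4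
      by_contra hle
      push_neg at hle
      have hsub : (Finset.Icc (r + 1) s).filter (fun k => π₃⁻¹ k ≤ π₃⁻¹ i) ⊆
          (Finset.Icc (r + 1) s).filter (fun k => π₃⁻¹ k ≤ π₃⁻¹ j) := by
        intro k hk
        simp only [Finset.mem_filter] at hk ⊢
        exact ⟨hk.1, hk.2.trans hle⟩
      have := Finset.card_le_card hsub
      omega
end

section
/- Let r and s be coprime integers with 1 < r < s. Then the inversion set Inv(π₅⁻¹ π₂) contains the inversion set Inv(π₂). -/
theorem stmt_8
    (r s : ℕ) (hr : 1 < r) (hrs : r < s) (hco : Nat.Coprime r s)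
    (π₂ : Equiv.Perm ℕ)
    (hπ₂₁ : ∀ i : ℕ, 1 ≤ i → i ≤ s - r → π₂ i = r + i)
    (hπ₂₂ : ∀ i : ℕ, s - r + 1 ≤ i → i ≤ s → π₂ i = s + 1 - i)
    (hπ₂₃ : ∀ i : ℕ, i = 0 ∨ s < i → π₂ i = i)
    (π₃ : Equiv.Perm ℕ)
    (hπ₃₁ : ∀ i : ℕ, 1 ≤ i → i ≤ s → 1 ≤ π₃ i ∧ π₃ i ≤ s ∧ π₃ i % s = (r * i) % s)
    (hπ₃₂ : ∀ i : ℕ, i = 0 ∨ s < i → π₃ i = i)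
    (π₅ : Equiv.Perm ℕ)
    (hπ₅₁ : ∀ i : ℕ, 1 ≤ i → i ≤ r → π₅⁻¹ i = i)
    (hπ₅₂ : ∀ i : ℕ, r + 1 ≤ i → i ≤ s →
      π₅⁻¹ i = r + ((Finset.Icc (r + 1) s).filter (fun j => π₃⁻¹ j ≤ π₃⁻¹ i)).card)
    (hπ₅₃ : ∀ i : ℕ, i = 0 ∨ s < i → π₅ i = i) :
    invSet s π₂ ⊆ invSet s (π₅⁻¹ * π₂) := by
  -- π₅⁻¹ maps [r+1, s] into [r+1, ∞)
  have key : ∀ b : ℕ, r + 1 ≤ b → b ≤ s → r + 1 ≤ π₅⁻¹ b := by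
    intro b hb1 hb2
    rw [hπ₅₂ b hb1 hb2]
    have hmem : b ∈ (Finset.Icc (r + 1) s).filter (fun j => π₃⁻¹ j ≤ π₃⁻¹ b) := by
      simp [Finset.mem_filter, Finset.mem_Icc, hb1, hb2]
    have : 0 < ((Finset.Icc (r + 1) s).filter (fun j => π₃⁻¹ j ≤ π₃⁻¹ b)).card :=
      Finset.card_pos.2 ⟨b, hmem⟩
    omega
  rintro ⟨i, j⟩ ⟨h1, h2, h3, h4⟩
  dsimp only at h1 h2 h3 h4 ⊢
  refine ⟨h1, h2, h3, ?_⟩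
  simp only [Equiv.Perm.mul_apply]
  by_cases hi : i ≤ s - r
  · have hvi : π₂ i = r + i := hπ₂₁ i h1 hi
    by_cases hj : j ≤ s - r
    · have hvj : π₂ j = r + j := hπ₂₁ j (by omega) hj
      omega
    · have hvj : π₂ j = s + 1 - j := hπ₂₂ j (by omega) h3
      have hjr : π₂ j ≤ r := by omega
      have hj1 : 1 ≤ π₂ j := by omega
      rw [hπ₅₁ _ hj1 hjr]
      have := key (π₂ i) (by omega) (by omega)
      omega
  · have hvj : π₂ j = s + 1 - j := hπ₂₂ j (by omega) h3
    have hvi : π₂ i = s + 1 - i := hπ₂₂ i (by omega) (by omega)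
    rw [hπ₅₁ _ (by omega) (by omega), hπ₅₁ _ (by omega) (by omega)]
    omega
end

section
/- Let r and s be coprime integers with 1 < r < s. Then the inversion set Inv(π₅⁻¹ π₁) contains the inversion set Inv(π₁). -/
theorem stmt_9
    (r s : ℕ) (hr : 1 < r) (hrs : r < s) (hco : Nat.Coprime r s)
    (π₁ : Equiv.Perm ℕ)
    (hπ₁₁ : ∀ i : ℕ, 1 ≤ i → i ≤ r → π₁ i = r + 1 - i)
    (hπ₁₂ : ∀ i : ℕ, r + 1 ≤ i → i ≤ s → π₁ i = i)
    (hπ₁₃ : ∀ i : ℕ, i = 0 ∨ s < i → π₁ i = i)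
    (π₃ : Equiv.Perm ℕ)
    (hπ₃₁ : ∀ i : ℕ, 1 ≤ i → i ≤ s → 1 ≤ π₃ i ∧ π₃ i ≤ s ∧ π₃ i % s = (r * i) % s)
    (hπ₃₂ : ∀ i : ℕ, i = 0 ∨ s < i → π₃ i = i)
    (π₅ : Equiv.Perm ℕ)
    (hπ₅₁ : ∀ i : ℕ, 1 ≤ i → i ≤ r → π₅⁻¹ i = i)
    (hπ₅₂ : ∀ i : ℕ, r + 1 ≤ i → i ≤ s →
      π₅⁻¹ i = r + ((Finset.Icc (r + 1) s).filter (fun j => π₃⁻¹ j ≤ π₃⁻¹ i)).card)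
    (hπ₅₃ : ∀ i : ℕ, i = 0 ∨ s < i → π₅ i = i) :
    invSet s π₁ ⊆ invSet s (π₅⁻¹ * π₁) := by
  rintro ⟨i, j⟩ ⟨h1, h2, h3, h4⟩
  simp only [invSet, Set.mem_setOf_eq] at *
  -- first show j ≤ r
  have hjr : j ≤ r := by
    by_contra hj
    push_neg at hj
    rw [hπ₁₂ j hj h3] at h4
    rcases le_or_gt i r with hi | hi
    · have := hπ₁₁ i h1 hi
      omega
    · have := hπ₁₂ i hi (le_of_lt (lt_of_lt_of_le h2 h3))
      omega
  have hir : i ≤ r := le_of_lt (lt_of_lt_of_le h2 hjr)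
  have hi1 := hπ₁₁ i h1 hir
  have hj1 := hπ₁₁ j (le_trans h1 (le_of_lt h2)) hjr
  refine ⟨h1, h2, h3, ?_⟩
  simp only [Equiv.Perm.mul_apply, hi1, hj1]
  rw [hπ₅₁ _ (by omega) (by omega), hπ₅₁ _ (by omega) (by omega)]
  omega
end

section
/- Let r and s be coprime integers with 1 < r < s. Then the inversion set Inv(π₁ π₅⁻¹) contains the inversion set Inv(π₅⁻¹). -/
theorem stmt_10
    (r s : ℕ) (hr : 1 < r) (hrs : r < s) (hco : Nat.Coprime r s)
    (π₁ : Equiv.Perm ℕ)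
    (hπ₁₁ : ∀ i : ℕ, 1 ≤ i → i ≤ r → π₁ i = r + 1 - i)
    (hπ₁₂ : ∀ i : ℕ, r + 1 ≤ i → i ≤ s → π₁ i = i)
    (hπ₁₃ : ∀ i : ℕ, i = 0 ∨ s < i → π₁ i = i)
    (π₃ : Equiv.Perm ℕ)
    (hπ₃₁ : ∀ i : ℕ, 1 ≤ i → i ≤ s → 1 ≤ π₃ i ∧ π₃ i ≤ s ∧ π₃ i % s = (r * i) % s)
    (hπ₃₂ : ∀ i : ℕ, i = 0 ∨ s < i → π₃ i = i)
    (π₅ : Equiv.Perm ℕ)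
    (hπ₅₁ : ∀ i : ℕ, 1 ≤ i → i ≤ r → π₅⁻¹ i = i)
    (hπ₅₂ : ∀ i : ℕ, r + 1 ≤ i → i ≤ s →
      π₅⁻¹ i = r + ((Finset.Icc (r + 1) s).filter (fun j => π₃⁻¹ j ≤ π₃⁻¹ i)).card)
    (hπ₅₃ : ∀ i : ℕ, i = 0 ∨ s < i → π₅ i = i) :
    invSet s π₅⁻¹ ⊆ invSet s (π₁ * π₅⁻¹) := by
  -- for i in [r+1, s], π₅⁻¹ i ∈ [r+1, s]
  have key : ∀ i : ℕ, r + 1 ≤ i → i ≤ s → r + 1 ≤ π₅⁻¹ i ∧ π₅⁻¹ i ≤ s := by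
    intro i h1 h2
    rw [hπ₅₂ i h1 h2]
    constructor
    · have : i ∈ (Finset.Icc (r + 1) s).filter (fun j => π₃⁻¹ j ≤ π₃⁻¹ i) := by
        simp [Finset.mem_filter, Finset.mem_Icc, h1, h2]
      have hc : 1 ≤ ((Finset.Icc (r + 1) s).filter (fun j => π₃⁻¹ j ≤ π₃⁻¹ i)).card :=
        Finset.card_pos.mpr ⟨i, this⟩
      omega
    · have hc : ((Finset.Icc (r + 1) s).filter (fun j => π₃⁻¹ j ≤ π₃⁻¹ i)).card ≤
          (Finset.Icc (r + 1) s).card := Finset.card_filter_le _ _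
      have : (Finset.Icc (r + 1) s).card = s - r := by
        rw [Nat.card_Icc]; omega
      omega
  rintro ⟨i, j⟩ ⟨h1, h2, h3, h4⟩
  refine ⟨h1, h2, h3, ?_⟩
  simp only [Equiv.Perm.coe_mul, Function.comp_apply] at *
  set a := π₅⁻¹ i with ha
  set b := π₅⁻¹ j with hb
  -- a ≥ r+1
  have har : r + 1 ≤ a ∧ a ≤ s := by
    by_cases hi : i ≤ r
    · exfalso
      have hai : a = i := hπ₅₁ i h1 hi
      by_cases hj : j ≤ r
      · have : b = j := hπ₅₁ j (by omega) hj
        omega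
      · have := (key j (by omega) h3).1
        omega
    · exact key i (by omega) (by omega)
  have hπa : π₁ a = a := hπ₁₂ a har.1 har.2
  rw [hπa]
  by_cases hbr : b ≤ r
  · have hb1 : 1 ≤ b := by
      by_cases hj : j ≤ r
      · have : b = j := hπ₅₁ j (by omega) hj
        omega
      · have := (key j (by omega) h3).1; omega
    rw [hπ₁₁ b hb1 hbr]
    omega
  · have hbs : b ≤ s := by omega
    rw [hπ₁₂ b (by omega) hbs]
    omega
end

section
/- Let r and s be coprime integers with 1 < r < s. Then the inversion set Inv(π₁) contains the inversion set Inv(π₆⁻¹). -/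
theorem stmt_15
    (r s : ℕ) (hr : 1 < r) (hrs : r < s) (hco : Nat.Coprime r s)
    (π₁ : Equiv.Perm ℕ)
    (hπ₁₁ : ∀ i : ℕ, 1 ≤ i → i ≤ r → π₁ i = r + 1 - i)
    (hπ₁₂ : ∀ i : ℕ, r + 1 ≤ i → i ≤ s → π₁ i = i)
    (hπ₁₃ : ∀ i : ℕ, i = 0 ∨ s < i → π₁ i = i)
    (π₃ : Equiv.Perm ℕ)
    (hπ₃₁ : ∀ i : ℕ, 1 ≤ i → i ≤ s → 1 ≤ π₃ i ∧ π₃ i ≤ s ∧ π₃ i % s = (r * i) % s)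
    (hπ₃₂ : ∀ i : ℕ, i = 0 ∨ s < i → π₃ i = i)
    (π₆ : Equiv.Perm ℕ)
    (hπ₆₁ : ∀ i : ℕ, 1 ≤ i → i ≤ r →
      π₆⁻¹ i = ((Finset.Icc 1 r).filter (fun j => π₃⁻¹ j ≤ π₃⁻¹ i)).card)
    (hπ₆₂ : ∀ i : ℕ, r + 1 ≤ i → i ≤ s → π₆⁻¹ i = i)
    (hπ₆₃ : ∀ i : ℕ, i = 0 ∨ s < i → π₆ i = i) :
    invSet s π₆⁻¹ ⊆ invSet s π₁ := by
  intro p hp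
  obtain ⟨h1, h2, h3, h4⟩ := hp
  -- key: for 1 ≤ i ≤ r, π₆⁻¹ i ≤ r
  have key : ∀ i : ℕ, 1 ≤ i → i ≤ r → π₆⁻¹ i ≤ r := by
    intro i hi1 hi2
    rw [hπ₆₁ i hi1 hi2]
    calc ((Finset.Icc 1 r).filter (fun j => π₃⁻¹ j ≤ π₃⁻¹ i)).card
        ≤ (Finset.Icc 1 r).card := Finset.card_filter_le _ _
      _ = r := by rw [Nat.card_Icc]; omega
  have hj : p.2 ≤ r := by
    by_contra hjr
    push_neg at hjr
    have hj2 : π₆⁻¹ p.2 = p.2 := hπ₆₂ p.2 (by omega) h3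
    rcases le_or_gt p.1 r with hi | hi
    · have := key p.1 h1 hi
      omega
    · have : π₆⁻¹ p.1 = p.1 := hπ₆₂ p.1 (by omega) (by omega)
      omega
  have hi : p.1 ≤ r := by omega
  refine ⟨h1, h2, h3, ?_⟩
  rw [hπ₁₁ p.1 h1 hi, hπ₁₁ p.2 (by omega) hj]
  omega
end

section
/- Let r and s be coprime integers with 1 < r < s. For every integer i with s - ⌊s/r⌋ + 1 ≤ i ≤ s, one has π₅⁻¹(s - r(s-i)) = i. -/
lemma uniq_mod (a b s : ℕ) (h1 : 1 ≤ a) (h2 : a ≤ s) (h3 : 1 ≤ b) (h4 : b ≤ s)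
    (h5 : a % s = b % s) : a = b := by
  rcases Nat.lt_or_ge a s with ha | ha
  · rcases Nat.lt_or_ge b s with hb | hb
    · rwa [Nat.mod_eq_of_lt ha, Nat.mod_eq_of_lt hb] at h5
    · have hb' : b = s := le_antisymm h4 hb
      rw [Nat.mod_eq_of_lt ha, hb', Nat.mod_self] at h5
      omega
  · have ha' : a = s := le_antisymm h2 ha
    rw [ha', Nat.mod_self] at h5
    rcases Nat.lt_or_ge b s with hb | hb
    · rw [Nat.mod_eq_of_lt hb] at h5; omega
    · omega

lemma perm_apply_inv_self' {α : Type*} (f : Equiv.Perm α) (x : α) : f (f⁻¹ x) = x :=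
  f.apply_symm_apply x

lemma perm_inv_apply_self' {α : Type*} (f : Equiv.Perm α) (x : α) : f⁻¹ (f x) = x :=
  f.symm_apply_apply x

theorem stmt_17
    (r s : ℕ) (hr : 1 < r) (hrs : r < s) (hco : Nat.Coprime r s)
    (π₃ : Equiv.Perm ℕ)
    (hπ₃₁ : ∀ i : ℕ, 1 ≤ i → i ≤ s → 1 ≤ π₃ i ∧ π₃ i ≤ s ∧ π₃ i % s = (r * i) % s)
    (hπ₃₂ : ∀ i : ℕ, i = 0 ∨ s < i → π₃ i = i)
    (π₅ : Equiv.Perm ℕ)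
    (hπ₅₁ : ∀ i : ℕ, 1 ≤ i → i ≤ r → π₅⁻¹ i = i)
    (hπ₅₂ : ∀ i : ℕ, r + 1 ≤ i → i ≤ s →
      π₅⁻¹ i = r + ((Finset.Icc (r + 1) s).filter (fun j => π₃⁻¹ j ≤ π₃⁻¹ i)).card)
    (hπ₅₃ : ∀ i : ℕ, i = 0 ∨ s < i → π₅ i = i) :
    ∀ i : ℕ, s - s / r + 1 ≤ i → i ≤ s → π₅⁻¹ (s - r * (s - i)) = i := by
  -- basic facts
  have hsr : 1 ≤ s % r := by
    rcases Nat.eq_zero_or_pos (s % r) with h | h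
    · exfalso
      have : r ∣ s := Nat.dvd_of_mod_eq_zero h
      have : r ∣ Nat.gcd r s := Nat.dvd_gcd dvd_rfl this
      rw [hco] at this
      have := Nat.le_of_dvd one_pos this
      omega
    · exact h
  have hdm : r * (s / r) + s % r = s := Nat.div_add_mod s r
  have hq1 : 1 ≤ s / r := Nat.one_le_div_iff (by omega) |>.2 (le_of_lt hrs)
  -- s - s/r ≥ r
  have hkey : r ≤ s - s / r := by
    have h1 : 1 * (r - 1) ≤ (s / r) * (r - 1) := Nat.mul_le_mul_right _ hq1
    have h2 : (s / r) * (r - 1) + (s / r) * 1 = (s / r) * r := by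
      rw [← Nat.mul_add]; congr 1; omega
    have h3 : (s / r) * r = r * (s / r) := Nat.mul_comm _ _
    omega
  -- Lemma A: π₃ x = s - r*(s-x) for x in the top range
  have hA : ∀ x : ℕ, s - s / r + 1 ≤ x → x ≤ s →
      π₃ x = s - r * (s - x) ∧ r + 1 ≤ s - r * (s - x) := by
    intro x hx1 hx2
    have hx0 : 1 ≤ x := by omega
    obtain ⟨k, hxk⟩ : ∃ k, x + k = s := ⟨s - x, by omega⟩
    have hsx : s - x = k := by omega
    rw [hsx]
    have hks : k + 1 ≤ s / r := by omega
    have hrk : r * (k + 1) ≤ r * (s / r) := Nat.mul_le_mul_left r hks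
    have hrq : r * (s / r) ≤ s - s % r := by
      have : r * (s / r) = s / r * r := Nat.mul_comm _ _
      omega
    have hrk' : r * (k + 1) = r * k + r := by ring
    have hm1 : r + 1 ≤ s - r * k := by omega
    have hm2 : s - r * k ≤ s := Nat.sub_le _ _
    -- r*x = (s - r*k) + (r-1)*s
    have hsum : r * x + r * k = r * s := by rw [← Nat.mul_add, hxk]
    obtain ⟨u, hu⟩ : ∃ u, u = (r - 1) * s := ⟨_, rfl⟩
    have ht : u + 1 * s = r * s := by
      rw [hu, ← Nat.add_mul]; congr 1; omega
    have heq : r * x = (s - r * k) + u := by omega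
    have hmod : (r * x) % s = (s - r * k) % s := by
      rw [heq, hu, Nat.add_mul_mod_self_right]
    obtain ⟨h1, h2, h3⟩ := hπ₃₁ x hx0 hx2
    have := uniq_mod (π₃ x) (s - r * k) s h1 h2 (by omega) hm2 (by rw [h3, hmod])
    exact ⟨this, hm1⟩
  -- preimages of [1,r] are small
  have hA' : ∀ j : ℕ, 1 ≤ j → j ≤ r → π₃⁻¹ j ≤ s - s / r := by
    intro j hj1 hj2
    by_contra hcon
    push_neg at hcon
    have hy2 : π₃⁻¹ j ≤ s := by
      by_contra hy
      push_neg at hy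
      have := hπ₃₂ (π₃⁻¹ j) (Or.inr hy)
      rw [perm_apply_inv_self'] at this
      omega
    have := (hA (π₃⁻¹ j) (by omega) hy2).1
    rw [perm_apply_inv_self'] at this
    have := (hA (π₃⁻¹ j) (by omega) hy2).2
    omega
  intro i hi1 hi2
  have hir : r + 1 ≤ i := by omega
  set m := s - r * (s - i) with hm
  obtain ⟨hπ3i, hm1⟩ := hA i hi1 hi2
  have hm2 : m ≤ s := Nat.sub_le _ _
  have hinv : π₃⁻¹ m = i := by rw [hm, ← hπ3i, perm_inv_apply_self']
  rw [hπ₅₂ m hm1 hm2, hinv]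
  -- card of filter over Icc 1 s is i
  have hT : ((Finset.Icc 1 s).filter (fun j => π₃⁻¹ j ≤ i)).card = i := by
    have himg : (Finset.Icc 1 s).filter (fun j => π₃⁻¹ j ≤ i) =
        (Finset.Icc 1 i).image π₃ := by
      ext j
      simp only [Finset.mem_filter, Finset.mem_Icc, Finset.mem_image]
      constructor
      · rintro ⟨⟨hj1, hj2⟩, hj3⟩
        refine ⟨π₃⁻¹ j, ⟨?_, hj3⟩, perm_apply_inv_self' _ _⟩
        by_contra h0
        have : π₃⁻¹ j = 0 := by omega
        have := hπ₃₂ (π₃⁻¹ j) (Or.inl this)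
        rw [perm_apply_inv_self'] at this
        omega
      · rintro ⟨x, ⟨hx1, hx2⟩, rfl⟩
        obtain ⟨h1, h2, _⟩ := hπ₃₁ x hx1 (le_trans hx2 hi2)
        refine ⟨⟨h1, h2⟩, ?_⟩
        rw [perm_inv_apply_self']
        exact hx2
    rw [himg, Finset.card_image_of_injective _ π₃.injective, Nat.card_Icc]
    omega
  have hT' : (Finset.Icc 1 r).filter (fun j => π₃⁻¹ j ≤ i) = Finset.Icc 1 r := by
    apply Finset.filter_eq_self.2
    intro j hj
    rw [Finset.mem_Icc] at hj
    have := hA' j hj.1 hj.2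
    omega
  have hsplit : Finset.Icc 1 s = Finset.Icc 1 r ∪ Finset.Icc (r + 1) s := by
    ext a
    simp only [Finset.mem_union, Finset.mem_Icc]
    omega
  have hdisj : Disjoint (Finset.Icc 1 r) (Finset.Icc (r + 1) s) := by
    rw [Finset.disjoint_left]
    intro a ha hb
    rw [Finset.mem_Icc] at ha hb
    omega
  have hcards : ((Finset.Icc (r + 1) s).filter (fun j => π₃⁻¹ j ≤ i)).card = i - r := by
    have := hT
    rw [hsplit, Finset.filter_union,
      Finset.card_union_of_disjoint (Finset.disjoint_filter_filter hdisj), hT',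
      Nat.card_Icc] at this
    omega
  rw [hcards]
  omega
end

section
/- Let r and s be coprime integers with 1 < r < s. For every integer i with s - ⌊s/r⌋ + 1 ≤ i ≤ s, one has (π₆⁻¹ π₁⁻¹ π₅⁻¹ π₃)(i) = i, i.e. π₆⁻¹(π₁⁻¹(π₅⁻¹(π₃(i)))) = i. -/
theorem stmt_19
    (r s : ℕ) (hr : 1 < r) (hrs : r < s) (hco : Nat.Coprime r s)
    (π₁ : Equiv.Perm ℕ)
    (hπ₁₁ : ∀ i : ℕ, 1 ≤ i → i ≤ r → π₁ i = r + 1 - i)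
    (hπ₁₂ : ∀ i : ℕ, r + 1 ≤ i → i ≤ s → π₁ i = i)
    (hπ₁₃ : ∀ i : ℕ, i = 0 ∨ s < i → π₁ i = i)
    (π₃ : Equiv.Perm ℕ)
    (hπ₃₁ : ∀ i : ℕ, 1 ≤ i → i ≤ s → 1 ≤ π₃ i ∧ π₃ i ≤ s ∧ π₃ i % s = (r * i) % s)
    (hπ₃₂ : ∀ i : ℕ, i = 0 ∨ s < i → π₃ i = i)
    (π₅ : Equiv.Perm ℕ)
    (hπ₅₁ : ∀ i : ℕ, 1 ≤ i → i ≤ r → π₅⁻¹ i = i)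
    (hπ₅₂ : ∀ i : ℕ, r + 1 ≤ i → i ≤ s →
      π₅⁻¹ i = r + ((Finset.Icc (r + 1) s).filter (fun j => π₃⁻¹ j ≤ π₃⁻¹ i)).card)
    (hπ₅₃ : ∀ i : ℕ, i = 0 ∨ s < i → π₅ i = i)
    (π₆ : Equiv.Perm ℕ)
    (hπ₆₁ : ∀ i : ℕ, 1 ≤ i → i ≤ r →
      π₆⁻¹ i = ((Finset.Icc 1 r).filter (fun j => π₃⁻¹ j ≤ π₃⁻¹ i)).card)
    (hπ₆₂ : ∀ i : ℕ, r + 1 ≤ i → i ≤ s → π₆⁻¹ i = i)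
    (hπ₆₃ : ∀ i : ℕ, i = 0 ∨ s < i → π₆ i = i) :
    ∀ i : ℕ, s - s / r + 1 ≤ i → i ≤ s →
      π₆⁻¹ (π₁⁻¹ (π₅⁻¹ (π₃ i))) = i := by
  obtain ⟨q, hq⟩ : ∃ q, s / r = q := ⟨s / r, rfl⟩
  rw [hq]
  have hq1 : 1 ≤ q := by rw [← hq]; exact (Nat.one_le_div_iff (by omega)).2 (le_of_lt hrs)
  have hqr_le : q * r ≤ s := by rw [← hq]; exact Nat.div_mul_le_self s r
  have hqr_ne : q * r ≠ s := by
    intro h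
    have hdvd : r ∣ s := ⟨q, by rw [← h]; exact mul_comm q r⟩
    have : r ∣ 1 := hco ▸ Nat.dvd_gcd dvd_rfl hdvd
    have := Nat.le_of_dvd one_pos this
    omega
  have hqr_lt : q * r + 1 ≤ s := by omega
  -- q + r ≤ s
  have hqrs : q + r ≤ s := by
    have h1 : 1 * (r - 1) ≤ q * (r - 1) := Nat.mul_le_mul_right _ hq1
    have h2 : q * (r - 1) + q * 1 = q * r := by
      rw [← Nat.mul_add]; congr 1; omega
    omega
  -- explicit formula for π₃ on the top range
  have hform : ∀ k : ℕ, s - q + 1 ≤ k → k ≤ s → π₃ k = s - r * (s - k) := by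
    intro k hk1 hk2
    obtain ⟨h1, h2, h3⟩ := hπ₃₁ k (by omega) hk2
    obtain ⟨t, htdef⟩ : ∃ t, s - k = t := ⟨s - k, rfl⟩
    rw [htdef]
    have ht : t + 1 ≤ q := by omega
    have h5 : r * t + r ≤ q * r := by
      calc r * t + r = r * (t + 1) := by ring
        _ ≤ r * q := Nat.mul_le_mul_left r ht
        _ = q * r := mul_comm _ _
    have hks : k + t = s := by omega
    have hmul : r * k + r * t = r * s := by rw [← Nat.mul_add, hks]
    by_cases ht0 : t = 0
    · -- k = s, π₃ k = s
      have hrt0 : r * t = 0 := by rw [ht0, Nat.mul_zero]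
      have hmod : (r * k) % s = 0 := by
        have : r * k = r * s := by omega
        rw [this, Nat.mul_mod_left]
      rw [hmod] at h3
      have hdvd : s ∣ π₃ k := Nat.dvd_of_mod_eq_zero h3
      have := Nat.le_of_dvd (by omega) hdvd
      omega
    · -- t ≥ 1
      have htpos : 1 ≤ t := by omega
      have hrt1 : r ≤ r * t := Nat.le_mul_of_pos_right r (by omega)
      have hsrs : s ≤ r * s := Nat.le_mul_of_pos_left s (by omega)
      have hrs1 : (r - 1) * s + s = r * s := by
        rw [Nat.sub_one_mul]; omega
      have hmod : (r * k) % s = s - r * t := by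
        have heq : r * k = (s - r * t) + (r - 1) * s := by omega
        rw [heq, Nat.add_mul_mod_self_right, Nat.mod_eq_of_lt (by omega)]
      rw [hmod] at h3
      rcases Nat.lt_or_ge (π₃ k) s with hlt | hge
      · rw [Nat.mod_eq_of_lt hlt] at h3; omega
      · have hks' : π₃ k = s := by omega
        rw [hks', Nat.mod_self] at h3
        omega
  -- bounds for π₃ on the top range
  have hbound : ∀ k : ℕ, s - q + 1 ≤ k → k ≤ s → r + 1 ≤ π₃ k ∧ π₃ k ≤ s := by
    intro k hk1 hk2
    rw [hform k hk1 hk2]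
    have ht : (s - k) + 1 ≤ q := by omega
    have h5 : r * (s - k) + r ≤ q * r := by
      calc r * (s - k) + r = r * ((s - k) + 1) := by ring
        _ ≤ r * q := Nat.mul_le_mul_left r ht
        _ = q * r := mul_comm _ _
    omega
  intro i hi1 hi2
  have hi_gt_r : r + 1 ≤ i := by omega
  obtain ⟨hb1, hb2⟩ := hbound i hi1 hi2
  -- the cardinality computation
  have hinv : π₃⁻¹ (π₃ i) = i := Equiv.symm_apply_apply π₃ i
  have hfilt :
      ((Finset.Icc (r + 1) s).filter (fun j => π₃⁻¹ j ≤ π₃⁻¹ (π₃ i))).card = i - r := by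
    have hsplit :=
      Finset.card_filter_add_card_filter_not
        (s := Finset.Icc (r + 1) s) (p := fun j => π₃⁻¹ j ≤ π₃⁻¹ (π₃ i))
    have hcompl :
        ((Finset.Icc (r + 1) s).filter (fun j => ¬ π₃⁻¹ j ≤ π₃⁻¹ (π₃ i)))
          = Finset.image π₃ (Finset.Icc (i + 1) s) := by
      ext j
      simp only [Finset.mem_filter, Finset.mem_Icc, Finset.mem_image, hinv, not_le]
      constructor
      · rintro ⟨⟨hj1, hj2⟩, hj3⟩
        refine ⟨π₃⁻¹ j, ⟨hj3, ?_⟩, Equiv.apply_symm_apply π₃ j⟩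
        by_contra hk
        push_neg at hk
        have := hπ₃₂ (π₃⁻¹ j) (Or.inr hk)
        have h2 : π₃ (π₃⁻¹ j) = j := Equiv.apply_symm_apply π₃ j
        omega
      · rintro ⟨k, ⟨hk1, hk2⟩, rfl⟩
        obtain ⟨hb1', hb2'⟩ := hbound k (by omega) hk2
        refine ⟨⟨hb1', hb2'⟩, ?_⟩
        rw [Equiv.Perm.inv_def, Equiv.symm_apply_apply]
        omega
    rw [hcompl] at hsplit
    rw [Finset.card_image_of_injective _ π₃.injective] at hsplit
    rw [Nat.card_Icc, Nat.card_Icc] at hsplit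
    omega
  have h5inv : π₅⁻¹ (π₃ i) = i := by
    rw [hπ₅₂ (π₃ i) hb1 hb2, hfilt]
    omega
  have h1inv : π₁⁻¹ i = i := by
    conv_lhs => rw [← hπ₁₂ i hi_gt_r hi2]
    exact Equiv.symm_apply_apply π₁ i
  rw [h5inv, h1inv, hπ₆₂ i hi_gt_r hi2]
end
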